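/- Let I be an infinite set (an infinite type). Then the full symmetric group Sym(I) = Equiv.Perm I is pseudocentral, i.e. P(Equiv.Perm I) is the whole group. -/

import Mathlib

open Cardinal Set Function Subgroup

noncomputable section

namespace PseudoPerm

variable {α : Type u}

/-- Glue a bijection between two subsets and a bijection between their complements
into a permutation of `α`. -/
noncomputable def pglue (A B : Set α) (f : A ≃ B) (h : (Aᶜ : Set α) ≃ (Bᶜ : Set α)) :
    Equiv.Perm α := by
  classical
  exact (Equiv.Set.sumCompl A).symm.trans ((f.sumCongr h).trans (Equiv.Set.sumCompl B))

lemma pglue_mem {A B : Set α} (f : A ≃ B) (h : (Aᶜ : Set α) ≃ (Bᶜ : Set α)) {x : α}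
    (hx : x ∈ A) : pglue A B f h x = ↑(f ⟨x, hx⟩) := by
  classical
  simp [pglue, Equiv.Set.sumCompl_symm_apply_of_mem hx]

lemma pglue_nmem {A B : Set α} (f : A ≃ B) (h : (Aᶜ : Set α) ≃ (Bᶜ : Set α)) {x : α}
    (hx : x ∉ A) : pglue A B f h x = ↑(h ⟨x, hx⟩) := by
  classical
  simp [pglue, Equiv.Set.sumCompl_symm_apply_of_notMem hx]

/-- The support of a permutation, as a set. -/
def suppSet (σ : Equiv.Perm α) : Set α := {x | σ x ≠ x}

/-- Key lemma: if `N` is a normal subgroup containing a permutation `Λ` with a family of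
parallel `ℤ`-lanes indexed by `α`, then any permutation supported inside the level-0
transversal of the lanes belongs to `N`. -/
lemma mem_of_supp_sub_level {N : Subgroup (Equiv.Perm α)} (hN : N.Normal)
    {Λ : Equiv.Perm α} (hΛ : Λ ∈ N) {e : α × ℤ → α} (he : Injective e)
    (hlane : ∀ a n, Λ (e (a, n)) = e (a, n + 1))
    (σ : Equiv.Perm α) (hs : ∀ x, σ x ≠ x → ∃ a, e (a, 0) = x) : σ ∈ N := by
  classical
  have he0 : ∀ {b c : α}, e (b, 0) = e (c, 0) → b = c := by
    intro b c h
    exact congrArg Prod.fst (he h)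
  have hfix : ∀ (a : α) (n : ℤ), n ≠ 0 → σ (e (a, n)) = e (a, n) := by
    intro a n hn
    by_contra h
    obtain ⟨b, hb⟩ := hs _ h
    have := he hb
    exact hn (congrArg Prod.snd this).symm
  have hfix' : ∀ x, x ∉ range e → σ x = x := by
    intro x hx
    by_contra h
    obtain ⟨b, hb⟩ := hs _ h
    exact hx ⟨(b, 0), hb⟩
  have hP : ∀ a : α, ∃ b, e (b, 0) = σ (e (a, 0)) := by
    intro a
    by_cases h : σ (e (a, 0)) = e (a, 0)
    · exact ⟨a, h.symm⟩
    · exact hs _ fun hh => h (σ.injective hh)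
  have hQ : ∀ a : α, ∃ b, e (b, 0) = σ⁻¹ (e (a, 0)) := by
    intro a
    by_cases h : σ⁻¹ (e (a, 0)) = e (a, 0)
    · exact ⟨a, h.symm⟩
    · refine hs _ ?_
      rw [Equiv.Perm.coe_inv, Equiv.apply_symm_apply]
      exact fun hh => h hh.symm
  let π : Equiv.Perm α :=
    { toFun := fun a => (hP a).choose
      invFun := fun a => (hQ a).choose
      left_inv := by
        intro a
        apply he0
        rw [(hQ _).choose_spec, (hP a).choose_spec, Equiv.Perm.coe_inv, Equiv.symm_apply_apply]
      right_inv := by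
        intro a
        apply he0
        rw [(hP _).choose_spec, (hQ a).choose_spec, Equiv.Perm.coe_inv, Equiv.apply_symm_apply] }
  have hπ : ∀ a, e (π a, 0) = σ (e (a, 0)) := fun a => (hP a).choose_spec
  let Φ : Equiv.Perm (α × ℤ) :=
    { toFun := fun p => (if 0 ≤ p.2 then π p.1 else p.1, p.2)
      invFun := fun p => (if 0 ≤ p.2 then π.symm p.1 else p.1, p.2)
      left_inv := by rintro ⟨a, n⟩; by_cases h : 0 ≤ n <;> simp [h]
      right_inv := by rintro ⟨a, n⟩; by_cases h : 0 ≤ n <;> simp [h] }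
  have hΦ : ∀ p : α × ℤ, Φ p = (if 0 ≤ p.2 then π p.1 else p.1, p.2) := fun _ => rfl
  have hΦs : ∀ p : α × ℤ, Φ.symm p = (if 0 ≤ p.2 then π.symm p.1 else p.1, p.2) := fun _ => rfl
  let fE : (range e : Set α) ≃ (range e : Set α) :=
    (Equiv.ofInjective e he).symm.trans (Φ.trans (Equiv.ofInjective e he))
  let E : Equiv.Perm α := pglue (range e) (range e) fE (Equiv.refl _)
  have hE1 : ∀ p : α × ℤ, E (e p) = e (Φ p) := by
    intro p
    have hx : e p ∈ range e := ⟨p, rfl⟩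
    rw [pglue_mem fE (Equiv.refl _) hx]
    show ((fE ⟨e p, hx⟩ : (range e : Set α)) : α) = e (Φ p)
    have : (⟨e p, hx⟩ : (range e : Set α)) = Equiv.ofInjective e he p := rfl
    rw [this]
    simp [fE]
  have hE2 : ∀ x, x ∉ range e → E x = x := by
    intro x hx
    rw [pglue_nmem fE (Equiv.refl _) hx]
    rfl
  have hE3 : ∀ p : α × ℤ, E.symm (e p) = e (Φ.symm p) := by
    intro p
    rw [Equiv.symm_apply_eq, hE1, Equiv.apply_symm_apply]
  have hE4 : ∀ x, x ∉ range e → E.symm x = x := by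
    intro x hx
    by_cases h : E.symm x ∈ range e
    · obtain ⟨p, hp⟩ := h
      exfalso
      apply hx
      have : x = E (e p) := by rw [hp, Equiv.apply_symm_apply]
      rw [this, hE1]
      exact ⟨_, rfl⟩
    · have h2 := hE2 _ h
      have h3 : E (E.symm x) = x := Equiv.apply_symm_apply _ _
      rw [h2] at h3
      exact h3
  have key : σ = (E * Λ * E⁻¹) * Λ⁻¹ := by
    apply Equiv.ext
    intro x
    have hmul : ((E * Λ * E⁻¹) * Λ⁻¹) x = E (Λ (E.symm (Λ.symm x))) := rfl
    rw [hmul]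
    by_cases hx : x ∈ range e
    · obtain ⟨⟨a, n⟩, rfl⟩ := hx
      have hΛinv : Λ.symm (e (a, n)) = e (a, n - 1) := by
        rw [Equiv.symm_apply_eq]
        have := hlane a (n - 1)
        rw [sub_add_cancel] at this
        exact this.symm
      rw [hΛinv, hE3, hΦs]
      simp only []
      by_cases h1 : 0 ≤ n - 1
      · have hn0 : ¬ n = 0 := by omega
        have h2 : (0:ℤ) ≤ n := by omega
        rw [if_pos h1, hlane, sub_add_cancel, hE1, hΦ]
        simp only [if_pos h2, Equiv.apply_symm_apply]
        exact hfix a n hn0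
      · by_cases h2 : 0 ≤ n
        · have hn0 : n = 0 := by omega
          subst hn0
          rw [if_neg h1, hlane, sub_add_cancel, hE1, hΦ]
          simp only [if_pos h2]
          exact (hπ a).symm
        · have hn0 : ¬ n = 0 := by omega
          rw [if_neg h1, hlane, sub_add_cancel, hE1, hΦ]
          simp only [if_neg h2]
          exact hfix a n hn0
    · have hx2 : Λ.symm x ∉ range e := by
        rintro ⟨p, hp⟩
        apply hx
        have : x = Λ (e p) := by rw [hp, Equiv.apply_symm_apply]
        rw [this, hlane]
        exact ⟨_, rfl⟩
      rw [hE4 _ hx2]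
      have : Λ (Λ.symm x) = x := Equiv.apply_symm_apply _ _
      rw [this, hE2 _ hx]
      exact hfix' x hx
  have hconj : (E * Λ * E⁻¹) ∈ N := hN.conj_mem Λ hΛ E
  rw [key]
  exact mul_mem hconj (inv_mem hΛ)

variable [Infinite α]

lemma card_prod_int : #(α × ℤ) = #α := by
  rw [Cardinal.mk_prod, Cardinal.mk_int, Cardinal.lift_uzero, Cardinal.lift_aleph0]
  exact Cardinal.mul_aleph0_eq (Cardinal.aleph0_le_mk α)

lemma card_sum_self : #(α ⊕ α) = #α := by
  rw [Cardinal.mk_sum, Cardinal.lift_id]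
  exact Cardinal.add_eq_self (Cardinal.aleph0_le_mk α)

lemma fix_or_supp (σ : Equiv.Perm α) :
    #((suppSet σ)ᶜ : Set α) = #α ∨ #(suppSet σ) = #α := by
  by_contra h
  push_neg at h
  have h1 : #((suppSet σ)ᶜ : Set α) < #α := lt_of_le_of_ne (Cardinal.mk_set_le _) h.1
  have h2 : #(suppSet σ) < #α := lt_of_le_of_ne (Cardinal.mk_set_le _) h.2
  have h3 : #α < #α := by
    calc #α = #(suppSet σ) + #((suppSet σ)ᶜ : Set α) := (Cardinal.mk_sum_compl _).symm
    _ < #α := Cardinal.add_lt_of_lt (Cardinal.aleph0_le_mk α) h2 h1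
  exact h3.false

/-- A maximal `σ`-free subset of the support has full cardinality. -/
lemma exists_free_set (σ : Equiv.Perm α) (h : #(suppSet σ) = #α) :
    ∃ T : Set α, T ⊆ suppSet σ ∧ (∀ x ∈ T, σ x ∉ T) ∧ #T = #α := by
  classical
  set S : Set (Set α) := {T | T ⊆ suppSet σ ∧ ∀ x ∈ T, σ x ∉ T} with hS
  have hchain : ∀ c ⊆ S, IsChain (· ⊆ ·) c → ∃ ub ∈ S, ∀ s ∈ c, s ⊆ ub := by
    intro c hc hchain
    refine ⟨⋃₀ c, ⟨?_, ?_⟩, fun s hs => subset_sUnion_of_mem hs⟩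
    · intro x hx
      obtain ⟨t, ht, hxt⟩ := hx
      exact (hc ht).1 hxt
    · rintro x ⟨t, ht, hxt⟩ ⟨t', ht', hxt'⟩
      rcases hchain.total ht ht' with hsub | hsub
      · exact (hc ht').2 x (hsub hxt) hxt'
      · exact (hc ht).2 x hxt (hsub hxt')
  obtain ⟨T, hT⟩ := zorn_subset S hchain
  have hTS : T ∈ S := hT.prop
  refine ⟨T, hTS.1, hTS.2, ?_⟩
  have hcover : suppSet σ ⊆ T ∪ σ '' T ∪ σ.symm '' T := by
    intro x hx
    by_contra hxn
    simp only [mem_union, not_or] at hxn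
    obtain ⟨⟨hx1, hx2⟩, hx3⟩ := hxn
    have hins : insert x T ∈ S := by
      constructor
      · exact insert_subset hx hTS.1
      · intro y hy
        rcases mem_insert_iff.mp hy with rfl | hyT
        · intro hcon
          rcases mem_insert_iff.mp hcon with heq | hmem
          · exact hx heq
          · exact hx3 ⟨σ y, hmem, Equiv.symm_apply_apply σ y⟩
        · intro hcon
          rcases mem_insert_iff.mp hcon with heq | hmem
          · exact hx2 ⟨y, hyT, heq⟩
          · exact hTS.2 y hyT hmem
    have := hT.eq_of_subset hins (subset_insert x T)
    have hxT : x ∈ T := by rw [this]; exact mem_insert x T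
    exact hx1 hxT
  have hb : #α ≤ #T + #T + #T := by
    calc #α = #(suppSet σ) := h.symm
    _ ≤ #(T ∪ σ '' T ∪ σ.symm '' T : Set α) := Cardinal.mk_le_mk_of_subset hcover
    _ ≤ #(T ∪ σ '' T : Set α) + #(σ.symm '' T : Set α) := Cardinal.mk_union_le _ _
    _ ≤ #T + #(σ '' T : Set α) + #(σ.symm '' T : Set α) :=
        add_le_add (Cardinal.mk_union_le _ _) le_rfl
    _ ≤ #T + #T + #T :=
        add_le_add (add_le_add le_rfl (Cardinal.mk_image_le)) (Cardinal.mk_image_le)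
  refine le_antisymm (Cardinal.mk_set_le _) ?_
  by_contra hlt
  push_neg at hlt
  have : #T + #T + #T < #α :=
    Cardinal.add_lt_of_lt (Cardinal.aleph0_le_mk α)
      (Cardinal.add_lt_of_lt (Cardinal.aleph0_le_mk α) hlt hlt) hlt
  exact absurd hb (not_le.mpr this)

/-- If the complement of the support of `σ` has full cardinality, then `σ` lies in `N`. -/
lemma mem_of_large_fix {N : Subgroup (Equiv.Perm α)} (hN : N.Normal)
    {Λ : Equiv.Perm α} (hΛ : Λ ∈ N) {e : α × ℤ → α} (he : Injective e)
    (hlane : ∀ a n, Λ (e (a, n)) = e (a, n + 1))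
    (σ : Equiv.Perm α) (hfixcard : #((suppSet σ)ᶜ : Set α) = #α) : σ ∈ N := by
  classical
  obtain ⟨ψ⟩ : Nonempty ((α ⊕ α) ≃ α) := Cardinal.eq.mp card_sum_self
  set bfun : ↥(suppSet σ) → α := fun s => e (ψ (Sum.inl (s : α)), 0) with hbdef
  have hbinj : Injective bfun := by
    intro s t hst
    have h1 := congrArg Prod.fst (he hst)
    exact Subtype.ext (Sum.inl_injective (ψ.injective h1))
  set afun : α → α := fun a => e (ψ (Sum.inr a), 0) with hadef
  have hainj : Injective afun := by
    intro s t hst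
    have h1 := congrArg Prod.fst (he hst)
    exact Sum.inr_injective (ψ.injective h1)
  have hsub : range afun ⊆ ((range bfun)ᶜ : Set α) := by
    rintro x ⟨a, rfl⟩ ⟨s, hs⟩
    have h1 := congrArg Prod.fst (he hs)
    exact Sum.inl_ne_inr (ψ.injective h1)
  have hcardB : #((range bfun)ᶜ : Set α) = #α := by
    refine le_antisymm (Cardinal.mk_set_le _) ?_
    calc #α = #(range afun) := (Cardinal.mk_range_eq afun hainj).symm
    _ ≤ #((range bfun)ᶜ : Set α) := Cardinal.mk_le_mk_of_subset hsub
  obtain ⟨hc⟩ : Nonempty (((suppSet σ)ᶜ : Set α) ≃ ((range bfun)ᶜ : Set α)) :=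
    Cardinal.eq.mp (hfixcard.trans hcardB.symm)
  set w : Equiv.Perm α := pglue (suppSet σ) (range bfun) (Equiv.ofInjective bfun hbinj) hc
    with hwdef
  have hσ' : (w * σ * w⁻¹) ∈ N := by
    refine mem_of_supp_sub_level hN hΛ he hlane _ ?_
    intro x hx
    have h1 : σ (w⁻¹ x) ≠ w⁻¹ x := by
      intro hcon
      apply hx
      have : (w * σ * w⁻¹) x = w (σ (w⁻¹ x)) := rfl
      rw [this, hcon]
      exact Equiv.apply_symm_apply w x
    have hmem : (w⁻¹ x : α) ∈ suppSet σ := h1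
    have hx_eq : x = w (w⁻¹ x) := (Equiv.apply_symm_apply w x).symm
    rw [pglue_mem _ _ hmem] at hx_eq
    exact ⟨ψ (Sum.inl (w⁻¹ x)), hx_eq.symm⟩
  have := hN.conj_mem _ hσ' w⁻¹
  have heq : w⁻¹ * (w * σ * w⁻¹) * (w⁻¹)⁻¹ = σ := by group
  rwa [heq] at this

/-- If the support of `σ` has full cardinality, then `σ` lies in `N`. -/
lemma mem_of_large_supp {N : Subgroup (Equiv.Perm α)} (hN : N.Normal)
    {Λ : Equiv.Perm α} (hΛ : Λ ∈ N) {e : α × ℤ → α} (he : Injective e)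
    (hlane : ∀ a n, Λ (e (a, n)) = e (a, n + 1))
    (σ : Equiv.Perm α) (hsupp : #(suppSet σ) = #α) : σ ∈ N := by
  classical
  obtain ⟨T, hTsub, hTfree, hTcard⟩ := exists_free_set σ hsupp
  obtain ⟨ζ⟩ : Nonempty ((α ⊕ α) ≃ T) := Cardinal.eq.mp (card_sum_self.trans hTcard.symm)
  set t1 : α → α := fun a => (ζ (Sum.inl a) : α) with ht1def
  set t2 : α → α := fun a => (ζ (Sum.inr a) : α) with ht2def
  have ht1T : ∀ a, t1 a ∈ T := fun a => (ζ (Sum.inl a)).2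
  have ht2T : ∀ a, t2 a ∈ T := fun a => (ζ (Sum.inr a)).2
  have ht1inj : Injective t1 := fun a b h =>
    Sum.inl_injective (ζ.injective (Subtype.coe_injective h))
  have ht2inj : Injective t2 := fun a b h =>
    Sum.inr_injective (ζ.injective (Subtype.coe_injective h))
  have ht12 : ∀ a b, t1 a ≠ t2 b := by
    intro a b h
    exact Sum.inl_ne_inr (ζ.injective (Subtype.coe_injective h))
  set dfun : α ⊕ α → α := fun s => Sum.rec (fun a => e (a, 0)) (fun a => e (a, 1)) s with hddef
  have hd : Injective dfun := by
    rintro (a | a) (b | b) hab <;> simp only [hddef] at hab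
    · exact congrArg Sum.inl (congrArg Prod.fst (he hab))
    · exact absurd (congrArg Prod.snd (he hab)) (by norm_num)
    · exact absurd (congrArg Prod.snd (he hab)) (by norm_num)
    · exact congrArg Sum.inr (congrArg Prod.fst (he hab))
  set rfun : α ⊕ α → α := fun s => Sum.rec (fun a => t1 a) (fun a => σ.symm (t1 a)) s
    with hrdef
  have hr : Injective rfun := by
    rintro (a | a) (b | b) hab <;> simp only [hrdef] at hab
    · exact congrArg Sum.inl (ht1inj hab)
    · exfalso
      have : σ (t1 a) = t1 b := by rw [hab, Equiv.apply_symm_apply]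
      exact hTfree _ (ht1T a) (this ▸ ht1T b)
    · exfalso
      have : σ (t1 b) = t1 a := by rw [← hab, Equiv.apply_symm_apply]
      exact hTfree _ (ht1T b) (this ▸ ht1T a)
    · exact congrArg Sum.inr (ht1inj (σ.symm.injective hab))
  have hDc : #((range dfun)ᶜ : Set α) = #α := by
    have hsub : range (fun a => e (a, 2)) ⊆ ((range dfun)ᶜ : Set α) := by
      rintro x ⟨a, rfl⟩ ⟨s | s, hs⟩ <;> simp only [hddef] at hs
      · exact absurd (congrArg Prod.snd (he hs)) (by norm_num)
      · exact absurd (congrArg Prod.snd (he hs)) (by norm_num)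
    refine le_antisymm (Cardinal.mk_set_le _) ?_
    calc #α = #(range (fun a => e (a, 2))) :=
          (Cardinal.mk_range_eq _ fun a b h => congrArg Prod.fst (he h)).symm
    _ ≤ _ := Cardinal.mk_le_mk_of_subset hsub
  have hRc : #((range rfun)ᶜ : Set α) = #α := by
    have hsub : range t2 ⊆ ((range rfun)ᶜ : Set α) := by
      rintro x ⟨a, rfl⟩ ⟨s | s, hs⟩ <;> simp only [hrdef] at hs
      · exact ht12 s a hs
      · have : σ (t2 a) = t1 s := by rw [← hs, Equiv.apply_symm_apply]
        exact hTfree _ (ht2T a) (this ▸ ht1T s)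
    refine le_antisymm (Cardinal.mk_set_le _) ?_
    calc #α = #(range t2) := (Cardinal.mk_range_eq _ ht2inj).symm
    _ ≤ _ := Cardinal.mk_le_mk_of_subset hsub
  obtain ⟨hcd⟩ : Nonempty (((range dfun)ᶜ : Set α) ≃ ((range rfun)ᶜ : Set α)) :=
    Cardinal.eq.mp (hDc.trans hRc.symm)
  set fD : (range dfun : Set α) ≃ (range rfun : Set α) :=
    (Equiv.ofInjective dfun hd).symm.trans (Equiv.ofInjective rfun hr) with hfDdef
  set v : Equiv.Perm α := pglue (range dfun) (range rfun) fD hcd with hvdef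
  have hv : ∀ s : α ⊕ α, v (dfun s) = rfun s := by
    intro s
    have hx : dfun s ∈ range dfun := ⟨s, rfl⟩
    rw [pglue_mem _ _ hx]
    show ((fD ⟨dfun s, hx⟩ : (range rfun : Set α)) : α) = rfun s
    have : (⟨dfun s, hx⟩ : (range dfun : Set α)) = Equiv.ofInjective dfun hd s := rfl
    rw [this]
    simp [hfDdef]
  set Λ' : Equiv.Perm α := v * Λ * v⁻¹ with hΛ'def
  have hΛ'N : Λ' ∈ N := hN.conj_mem Λ hΛ v
  set τ : Equiv.Perm α := σ * Λ' with hτdef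
  have hτfix : ∀ a, τ (t1 a) = t1 a := by
    intro a
    have h0 : v (e (a, 0)) = t1 a := hv (Sum.inl a)
    have h1 : v (e (a, 1)) = σ.symm (t1 a) := hv (Sum.inr a)
    have hvinv : v⁻¹ (t1 a) = e (a, 0) := by
      rw [← h0]
      exact Equiv.symm_apply_apply v _
    have : τ (t1 a) = σ (v (Λ (v⁻¹ (t1 a)))) := rfl
    rw [this, hvinv]
    have h2 : Λ (e (a, 0)) = e (a, 1) := by
      have := hlane a 0
      norm_num at this
      exact this
    rw [h2, h1, Equiv.apply_symm_apply]
  have hτcard : #((suppSet τ)ᶜ : Set α) = #α := by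
    have hsub : range t1 ⊆ ((suppSet τ)ᶜ : Set α) := by
      rintro x ⟨a, rfl⟩
      simp only [mem_compl_iff, suppSet, mem_setOf_eq, not_not]
      exact hτfix a
    refine le_antisymm (Cardinal.mk_set_le _) ?_
    calc #α = #(range t1) := (Cardinal.mk_range_eq _ ht1inj).symm
    _ ≤ _ := Cardinal.mk_le_mk_of_subset hsub
  have hτN : τ ∈ N := mem_of_large_fix hN hΛ he hlane τ hτcard
  have heq : τ * Λ'⁻¹ = σ := by rw [hτdef]; group
  rw [← heq]
  exact mul_mem hτN (inv_mem hΛ'N)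

/-- In the normal closure of the centraliser of any `g`, there is a permutation with
`|α|` parallel `ℤ`-lanes. -/
lemma lanes_exist (g : Equiv.Perm α) :
    ∃ (Λ : Equiv.Perm α) (e : α × ℤ → α),
      Λ ∈ Subgroup.normalClosure (↑(Subgroup.centralizer {g}) : Set (Equiv.Perm α)) ∧
      Injective e ∧ ∀ a n, Λ (e (a, n)) = e (a, n + 1) := by
  classical
  rcases fix_or_supp g with hF | hSu
  · -- large fixed-point set: build a "shift" supported inside the fixed points
    obtain ⟨φ⟩ : Nonempty ((α × ℤ) ≃ ((suppSet g)ᶜ : Set α)) :=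
      Cardinal.eq.mp (card_prod_int.trans hF.symm)
    set sh : Equiv.Perm (α × ℤ) := Equiv.prodCongr (Equiv.refl α) (Equiv.addRight (1:ℤ))
      with hshdef
    have hsh : ∀ (a : α) (n : ℤ), sh (a, n) = (a, n + 1) := fun a n => rfl
    set f : ((suppSet g)ᶜ : Set α) ≃ ((suppSet g)ᶜ : Set α) :=
      φ.symm.trans (sh.trans φ) with hfdef
    set Λ : Equiv.Perm α := pglue ((suppSet g)ᶜ) ((suppSet g)ᶜ) f (Equiv.refl _) with hΛdef
    set e : α × ℤ → α := fun p => (φ p : α) with hedef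
    have he : Injective e := fun p q h =>
      φ.injective (Subtype.coe_injective h)
    have heF : ∀ p, e p ∈ ((suppSet g)ᶜ : Set α) := fun p => (φ p).2
    have hlane : ∀ a n, Λ (e (a, n)) = e (a, n + 1) := by
      intro a n
      rw [hΛdef, pglue_mem f (Equiv.refl _) (heF (a, n))]
      show ((f ⟨e (a, n), heF (a,n)⟩ : ((suppSet g)ᶜ : Set α)) : α) = e (a, n+1)
      have h1 : (⟨e (a, n), heF (a, n)⟩ : ((suppSet g)ᶜ : Set α)) = φ (a, n) :=
        Subtype.ext rfl
      rw [h1, hfdef]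
      simp only [Equiv.trans_apply, Equiv.symm_apply_apply]
      rw [hsh]
    refine ⟨Λ, e, ?_, he, hlane⟩
    apply Subgroup.subset_normalClosure
    show Λ ∈ (Subgroup.centralizer {g} : Subgroup (Equiv.Perm α))
    rw [Subgroup.mem_centralizer_iff]
    intro h hh
    rw [Set.mem_singleton_iff] at hh
    rw [hh]
    apply Equiv.ext
    intro x
    have hgs : ∀ y, y ∈ ((suppSet g)ᶜ : Set α) → g y = y := by
      intro y hy
      simpa [suppSet] using hy
    by_cases hx : x ∈ ((suppSet g)ᶜ : Set α)
    · have h1 : (g * Λ) x = g (Λ x) := rfl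
      have h2 : (Λ * g) x = Λ (g x) := rfl
      rw [h1, h2, hgs x hx]
      have hΛx : Λ x ∈ ((suppSet g)ᶜ : Set α) := by
        rw [hΛdef, pglue_mem f (Equiv.refl _) hx]
        exact (f ⟨x, hx⟩).2
      rw [hgs _ hΛx]
    · have hgx : g x ∉ ((suppSet g)ᶜ : Set α) := by
        intro hcon
        apply hx
        have := hgs _ hcon
        have h2 : g x = x := g.injective this
        rwa [h2] at hcon
      have h1 : (g * Λ) x = g (Λ x) := rfl
      have h2 : (Λ * g) x = Λ (g x) := rfl
      have h3 : Λ x = x := by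
        rw [hΛdef, pglue_nmem f (Equiv.refl _) hx]; rfl
      have h4 : Λ (g x) = g x := by
        rw [hΛdef, pglue_nmem f (Equiv.refl _) hgx]; rfl
      rw [h1, h2, h3, h4]
  · -- large support : rewire a conjugate of g⁻¹ against g to create lanes
    set N : Subgroup (Equiv.Perm α) :=
      Subgroup.normalClosure (↑(Subgroup.centralizer {g}) : Set (Equiv.Perm α)) with hNdef
    have hNnormal : N.Normal := Subgroup.normalClosure_normal
    have hgN : g ∈ N := by
      apply Subgroup.subset_normalClosure
      show g ∈ (Subgroup.centralizer {g} : Subgroup (Equiv.Perm α))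
      rw [Subgroup.mem_centralizer_iff]
      intro h hh
      rw [Set.mem_singleton_iff] at hh
      rw [hh]
    obtain ⟨T, hTsub, hTfree, hTcard⟩ := exists_free_set g hSu
    have hcard3 : #((α × ℤ) ⊕ ((α × ℤ) ⊕ α)) = #α := by
      rw [Cardinal.mk_sum, Cardinal.mk_sum, Cardinal.lift_id, Cardinal.lift_id,
        Cardinal.lift_id, card_prod_int]
      rw [Cardinal.add_eq_self (Cardinal.aleph0_le_mk α)]
      exact Cardinal.add_eq_self (Cardinal.aleph0_le_mk α)
    obtain ⟨ζ⟩ : Nonempty (((α × ℤ) ⊕ ((α × ℤ) ⊕ α)) ≃ T) :=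
      Cardinal.eq.mp (hcard3.trans hTcard.symm)
    set xf : α × ℤ → α := fun p => (ζ (Sum.inl p) : α) with hxfdef
    set yf : α × ℤ → α := fun p => (ζ (Sum.inr (Sum.inl p)) : α) with hyfdef
    set zf : α → α := fun a => (ζ (Sum.inr (Sum.inr a)) : α) with hzfdef
    have hxT : ∀ p, xf p ∈ T := fun p => (ζ (Sum.inl p)).2
    have hyT : ∀ p, yf p ∈ T := fun p => (ζ (Sum.inr (Sum.inl p))).2
    have hzT : ∀ a, zf a ∈ T := fun a => (ζ (Sum.inr (Sum.inr a))).2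
    have hxinj : Injective xf := fun p q h =>
      Sum.inl_injective (ζ.injective (Subtype.coe_injective h))
    have hyinj : Injective yf := fun p q h =>
      Sum.inl_injective (Sum.inr_injective (ζ.injective (Subtype.coe_injective h)))
    have hzinj : Injective zf := fun p q h =>
      Sum.inr_injective (Sum.inr_injective (ζ.injective (Subtype.coe_injective h)))
    have hxy : ∀ p q, xf p ≠ yf q := fun p q h =>
      Sum.inl_ne_inr (ζ.injective (Subtype.coe_injective h))
    have hxz : ∀ p a, xf p ≠ zf a := fun p a h =>
      Sum.inl_ne_inr (ζ.injective (Subtype.coe_injective h))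
    have hyz : ∀ p a, yf p ≠ zf a := fun p a h =>
      Sum.inl_ne_inr (Sum.inr_injective (ζ.injective (Subtype.coe_injective h)))
    -- the rewiring permutation w
    set dfun : (α × ℤ) ⊕ (α × ℤ) → α :=
      fun s => Sum.rec (fun p => yf p) (fun p => g.symm (yf p)) s with hddef
    set rfun : (α × ℤ) ⊕ (α × ℤ) → α :=
      fun s => Sum.rec (fun p => xf p) (fun p => g.symm (xf (p.1, p.2 + 1))) s with hrdef
    have hd : Injective dfun := by
      rintro (p | p) (q | q) hab <;> simp only [hddef] at hab
      · exact congrArg Sum.inl (hyinj hab)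
      · exfalso
        have : g (yf p) = yf q := by rw [hab, Equiv.apply_symm_apply]
        exact hTfree _ (hyT p) (this ▸ hyT q)
      · exfalso
        have : g (yf q) = yf p := by rw [← hab, Equiv.apply_symm_apply]
        exact hTfree _ (hyT q) (this ▸ hyT p)
      · exact congrArg Sum.inr (hyinj (g.symm.injective hab))
    have hr : Injective rfun := by
      rintro (p | p) (q | q) hab <;> simp only [hrdef] at hab
      · exact congrArg Sum.inl (hxinj hab)
      · exfalso
        have : g (xf p) = xf (q.1, q.2 + 1) := by rw [hab, Equiv.apply_symm_apply]
        exact hTfree _ (hxT p) (this ▸ hxT (q.1, q.2 + 1))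
      · exfalso
        have : g (xf q) = xf (p.1, p.2 + 1) := by rw [← hab, Equiv.apply_symm_apply]
        exact hTfree _ (hxT q) (this ▸ hxT (p.1, p.2 + 1))
      · have h1 := Prod.ext_iff.mp (hxinj (g.symm.injective hab))
        have h4 : p.2 = q.2 := by have := h1.2; omega
        exact congrArg Sum.inr (Prod.ext h1.1 h4)
    have hDc : #((range dfun)ᶜ : Set α) = #α := by
      have hsub : range zf ⊆ ((range dfun)ᶜ : Set α) := by
        rintro x ⟨a, rfl⟩ ⟨s | s, hs⟩ <;> simp only [hddef] at hs
        · exact hyz s a hs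
        · have : g (zf a) = yf s := by rw [← hs, Equiv.apply_symm_apply]
          exact hTfree _ (hzT a) (this ▸ hyT s)
      refine le_antisymm (Cardinal.mk_set_le _) ?_
      calc #α = #(range zf) := (Cardinal.mk_range_eq _ hzinj).symm
      _ ≤ _ := Cardinal.mk_le_mk_of_subset hsub
    have hRc : #((range rfun)ᶜ : Set α) = #α := by
      have hsub : range zf ⊆ ((range rfun)ᶜ : Set α) := by
        rintro x ⟨a, rfl⟩ ⟨s | s, hs⟩ <;> simp only [hrdef] at hs
        · exact hxz s a hs
        · have : g (zf a) = xf (s.1, s.2 + 1) := by rw [← hs, Equiv.apply_symm_apply]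
          exact hTfree _ (hzT a) (this ▸ hxT (s.1, s.2 + 1))
      refine le_antisymm (Cardinal.mk_set_le _) ?_
      calc #α = #(range zf) := (Cardinal.mk_range_eq _ hzinj).symm
      _ ≤ _ := Cardinal.mk_le_mk_of_subset hsub
    obtain ⟨hcd⟩ : Nonempty (((range dfun)ᶜ : Set α) ≃ ((range rfun)ᶜ : Set α)) :=
      Cardinal.eq.mp (hDc.trans hRc.symm)
    set fD : (range dfun : Set α) ≃ (range rfun : Set α) :=
      (Equiv.ofInjective dfun hd).symm.trans (Equiv.ofInjective rfun hr) with hfDdef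
    set w : Equiv.Perm α := pglue (range dfun) (range rfun) fD hcd with hwdef
    have hw : ∀ s, w (dfun s) = rfun s := by
      intro s
      have hx : dfun s ∈ range dfun := ⟨s, rfl⟩
      rw [hwdef, pglue_mem _ _ hx]
      show ((fD ⟨dfun s, hx⟩ : (range rfun : Set α)) : α) = rfun s
      have : (⟨dfun s, hx⟩ : (range dfun : Set α)) = Equiv.ofInjective dfun hd s := rfl
      rw [this, hfDdef]
      simp
    set Λ : Equiv.Perm α := g * w * g⁻¹ * w⁻¹ with hΛdef
    have hΛN : Λ ∈ N := by
      have h1 : w * g⁻¹ * w⁻¹ ∈ N := hNnormal.conj_mem g⁻¹ (inv_mem hgN) w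
      have h2 : Λ = g * (w * g⁻¹ * w⁻¹) := by rw [hΛdef]; group
      rw [h2]
      exact mul_mem hgN h1
    refine ⟨Λ, xf, hΛN, hxinj, ?_⟩
    intro a n
    have h0 : Λ (xf (a, n)) = g (w (g⁻¹ (w⁻¹ (xf (a, n))))) := rfl
    have h1 : w⁻¹ (xf (a, n)) = yf (a, n) := by
      have := hw (Sum.inl (a, n))
      simp only [hddef, hrdef] at this
      rw [← this]
      exact Equiv.symm_apply_apply w _
    have h2 : (g⁻¹ : Equiv.Perm α) (yf (a, n)) = g.symm (yf (a, n)) := rfl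
    have h3 : w (g.symm (yf (a, n))) = g.symm (xf (a, n + 1)) := by
      have := hw (Sum.inr (a, n))
      simpa only [hddef, hrdef] using this
    rw [h0, h1, h2, h3]
    exact Equiv.apply_symm_apply g _

end PseudoPerm

/-- The pseudocentre of a group `G`: the intersection of the normal closures of the
centralizers of the elements of `G`. -/
def P (G : Type*) [Group G] : Subgroup G :=
  ⨅ g : G, Subgroup.normalClosure ↑(Subgroup.centralizer {g})

/-- The symmetric group on an infinite set is pseudocentral. -/
theorem pseudocentre_perm_infinite (I : Type*) [Infinite I] :
    P (Equiv.Perm I) = ⊤ := by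
  refine (Subgroup.eq_top_iff' _).mpr fun σ => ?_
  simp only [P]
  refine Subgroup.mem_iInf.mpr fun g => ?_
  obtain ⟨Λ, e, hΛ, he, hlane⟩ := PseudoPerm.lanes_exist g
  have hN :
      (Subgroup.normalClosure
        (↑(Subgroup.centralizer {g}) : Set (Equiv.Perm I))).Normal :=
    Subgroup.normalClosure_normal
  rcases PseudoPerm.fix_or_supp σ with h | h
  · exact PseudoPerm.mem_of_large_fix hN hΛ he hlane σ h
  · exact PseudoPerm.mem_of_large_supp hN hΛ he hlane σ h
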